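/- Let R be a commutative ring and n ≥ 1, and suppose that every matrix in M_n(R) is a sum of three idempotent matrices. Then the Jacobson radical J(R) is a nil ideal, and the quotient ring R/J(R) satisfies the identity x^3 = x (every element x of R/J(R) satisfies x^3 = x). -/

import Mathlib

open Matrix

set_option linter.unusedSectionVars false
set_option maxHeartbeats 1600000

section Helpers

variable {D : Type*} [CommRing D] [IsDomain D] {n : ℕ}

private lemma diff_sq (F G : Matrix (Fin n) (Fin n) D) (hF : F * F = F) (hG : G * G = G) :
    (F - G) * (F - G) = (2:D) • (F + G) - (F + G) * (F + G) := by
  have h : (F - G) * (F - G) = F*F - F*G - G*F + G*G := by noncomm_ring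
  have h2 : (F + G) * (F + G) = F*F + F*G + G*F + G*G := by noncomm_ring
  rw [h, h2, hF, hG, two_smul]
  abel

private lemma diff_sum (F G : Matrix (Fin n) (Fin n) D) (hF : F * F = F) (hG : G * G = G) :
    (F - G) * (F + G) + (F + G) * (F - G) = (2:D) • (F - G) := by
  have h : (F - G) * (F + G) + (F + G) * (F - G) = (F*F - G*G) + (F*F - G*G) := by noncomm_ring
  rw [h, hF, hG, two_smul]

private lemma lin_mul (T : Matrix (Fin n) (Fin n) D) (a b : D)
    (hT : T * T = a • T + b • (1 : Matrix (Fin n) (Fin n) D)) (p q r s : D) :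
    (p • T + q • (1 : Matrix (Fin n) (Fin n) D)) * (r • T + s • 1)
      = (p*r*a + p*s + q*r) • T + (p*r*b + q*s) • (1 : Matrix (Fin n) (Fin n) D) := by
  have expand : (p • T + q • (1 : Matrix (Fin n) (Fin n) D)) * (r • T + s • 1)
      = (p*r) • (T*T) + (p*s + q*r) • T + (q*s) • (1 : Matrix (Fin n) (Fin n) D) := by
    simp only [add_mul, mul_add, smul_mul_assoc, mul_smul_comm, smul_smul, mul_one, one_mul]
    module
  rw [expand, hT]
  module

private lemma scalar_constraint (hn : 0 < n) (h2 : (2:D) ≠ 0) (c : D)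
    (E F G : Matrix (Fin n) (Fin n) D) (hE : E * E = E) (hF : F * F = F) (hG : G * G = G)
    (hsum : E + F + G = c • (1 : Matrix (Fin n) (Fin n) D)) :
    c * (c-1) * (c-2) * (c-3) * (2*c-3) = 0 := by
  by_contra hne
  have hc0 : c ≠ 0 := fun h => hne (by rw [h]; ring)
  have hc1 : c - 1 ≠ 0 := fun h => hne (by linear_combination (c * (c-2) * (c-3) * (2*c-3)) * h)
  have hc2 : c - 2 ≠ 0 := fun h => hne (by linear_combination (c * (c-1) * (c-3) * (2*c-3)) * h)
  have hc3 : c - 3 ≠ 0 := fun h => hne (by linear_combination (c * (c-1) * (c-2) * (2*c-3)) * h)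
  have hc23 : 2*c - 3 ≠ 0 := fun h => hne (by linear_combination (c * (c-1) * (c-2) * (c-3)) * h)
  haveI : Nonempty (Fin n) := ⟨⟨0, hn⟩⟩
  set S : Matrix (Fin n) (Fin n) D := F + G with hSdef
  set Dm : Matrix (Fin n) (Fin n) D := F - G with hDdef
  have hES : E = c • (1 : Matrix (Fin n) (Fin n) D) - S := by
    rw [hSdef, ← hsum]; abel
  -- quadratic relation for S
  have hquad : (S - c • (1 : Matrix (Fin n) (Fin n) D)) * (S - (c-1) • 1) = 0 := by
    have e1 : S - c • (1 : Matrix (Fin n) (Fin n) D) = -E := by rw [hES]; abel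
    have e2 : S - (c-1) • (1 : Matrix (Fin n) (Fin n) D) = 1 - E := by
      rw [hES, sub_smul, one_smul]; abel
    rw [e1, e2, neg_mul, mul_sub, mul_one, hE, sub_self, neg_zero]
  have hSS : S * S = (2*c-1) • S + (-(c*c-c)) • (1 : Matrix (Fin n) (Fin n) D) := by
    have expand : (S - c • (1 : Matrix (Fin n) (Fin n) D)) * (S - (c-1) • 1)
        = S*S - ((2*c-1) • S + (-(c*c-c)) • (1 : Matrix (Fin n) (Fin n) D)) := by
      simp only [sub_mul, mul_sub, smul_mul_assoc, mul_smul_comm, smul_smul, mul_one, one_mul]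
      match_scalars <;> ring
    rw [← sub_eq_zero, ← expand, hquad]
  -- D^2 as a linear polynomial in S
  have hD2 : Dm * Dm = (3-2*c) • S + (c*c-c) • (1 : Matrix (Fin n) (Fin n) D) := by
    rw [hDdef, hSdef, diff_sq F G hF hG, ← hSdef, hSS]
    have h3 : (3-2*c) • S = (2:D) • S - (2*c-1) • S := by
      rw [← sub_smul]; congr 1; ring
    rw [h3]
    module
  -- D commutes S into its mirror
  have hDcomm : ∀ t : D, Dm * (S - t • 1) = ((2-t) • 1 - S) * Dm := by
    intro t
    have h := diff_sum F G hF hG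
    rw [← hSdef, ← hDdef] at h
    have lhs : Dm * (S - t • 1) = Dm * S - t • Dm := by
      rw [mul_sub, mul_smul_comm, mul_one]
    have rhs : ((2-t) • 1 - S) * Dm = (2-t) • Dm - S * Dm := by
      rw [sub_mul, smul_mul_assoc, one_mul]
    rw [lhs, rhs, ← sub_eq_zero]
    have expand : Dm * S - t • Dm - ((2-t) • Dm - S * Dm)
        = (Dm * S + S * Dm) - (2:D) • Dm := by
      have : (2:D) • Dm = (2-t) • Dm + t • Dm := by rw [← add_smul]; congr 1; ring
      rw [this]; abel
    rw [expand, h, sub_self]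
  -- invertibility of linear shifts of S
  have hshift : ∀ μ : D, (μ-c) * (μ-c+1) ≠ 0 → det (S - μ • (1 : Matrix (Fin n) (Fin n) D)) ≠ 0 := by
    intro μ hρ
    have key : (S - μ • (1 : Matrix (Fin n) (Fin n) D)) * (S - (2*c-1-μ) • 1)
        = (-((μ-c)*(μ-c+1))) • (1 : Matrix (Fin n) (Fin n) D) := by
      have e1 : S - μ • (1 : Matrix (Fin n) (Fin n) D)
          = (1:D) • S + (-μ) • (1 : Matrix (Fin n) (Fin n) D) := by module
      have e2 : S - (2*c-1-μ) • (1 : Matrix (Fin n) (Fin n) D)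
          = (1:D) • S + (-(2*c-1-μ)) • (1 : Matrix (Fin n) (Fin n) D) := by module
      rw [e1, e2, lin_mul S _ _ hSS]
      have hcoef : 1*1*(2*c-1) + 1*(-(2*c-1-μ)) + (-μ)*1 = 0 := by ring
      have hconst : 1*1*(-(c*c-c)) + (-μ)*(-(2*c-1-μ)) = -((μ-c)*(μ-c+1)) := by ring
      rw [hcoef, hconst, zero_smul, zero_add]
    intro hdet
    have := congrArg det key
    rw [det_mul, hdet, zero_mul, det_smul, det_one, mul_one, Fintype.card_fin] at this
    exact pow_ne_zero n (neg_ne_zero.mpr hρ) this.symm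
  -- determinant of D is nonzero
  have hdetD : det Dm ≠ 0 := by
    have key : (Dm * Dm) * ((-(3-2*c)) • S + ((3-2*c)*(2*c-1) + (c*c-c)) • (1 : Matrix (Fin n) (Fin n) D))
        = (c*(c-1)*(c-2)*(c-3)) • (1 : Matrix (Fin n) (Fin n) D) := by
      rw [hD2, lin_mul S _ _ hSS]
      have hcoef : (3-2*c)*(-(3-2*c))*(2*c-1) + (3-2*c)*((3-2*c)*(2*c-1) + (c*c-c))
          + (c*c-c)*(-(3-2*c)) = 0 := by ring
      have hconst : (3-2*c)*(-(3-2*c))*(-(c*c-c)) + (c*c-c)*((3-2*c)*(2*c-1) + (c*c-c))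
          = c*(c-1)*(c-2)*(c-3) := by ring
      rw [hcoef, hconst, zero_smul, zero_add]
    have hld := congrArg det key
    rw [det_mul, det_mul, det_smul, det_one, mul_one, Fintype.card_fin] at hld
    intro h0
    rw [h0, zero_mul, zero_mul] at hld
    have : (c*(c-1)*(c-2)*(c-3)) ≠ 0 :=
      mul_ne_zero (mul_ne_zero (mul_ne_zero hc0 hc1) hc2) hc3
    exact pow_ne_zero n this hld.symm
  -- one of the two shifts is singular
  have hprod0 : det (S - c • (1 : Matrix (Fin n) (Fin n) D)) * det (S - (c-1) • 1) = 0 := by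
    rw [← det_mul, hquad, det_zero]
  have hmirror : ∀ t : D, det (S - t • (1 : Matrix (Fin n) (Fin n) D)) = 0 →
      det (S - (2-t) • (1 : Matrix (Fin n) (Fin n) D)) = 0 := by
    intro t ht
    have h := congrArg det (hDcomm t)
    rw [det_mul, det_mul, ht, mul_zero] at h
    have h2' : ((2-t) • (1 : Matrix (Fin n) (Fin n) D) - S) = -(S - (2-t) • 1) := by abel
    rcases mul_eq_zero.mp h.symm with h' | h'
    · rw [h2', det_neg, Fintype.card_fin] at h'
      rcases mul_eq_zero.mp h' with h'' | h''
      · have hneg1 : (-1 : D) ≠ 0 := neg_ne_zero.mpr one_ne_zero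
        exact absurd h'' (pow_ne_zero n hneg1)
      · exact h''
    · exact absurd h' hdetD
  rcases mul_eq_zero.mp hprod0 with h0 | h0
  · have hfin := hmirror c h0
    refine hshift (2-c) ?_ hfin
    have u : (2 - c - c) * (2 - c - c + 1) = (2*(c-1)) * (2*c-3) := by ring
    rw [u]
    exact mul_ne_zero (mul_ne_zero h2 hc1) hc23
  · have hfin := hmirror (c-1) h0
    refine hshift (2-(c-1)) ?_ hfin
    have u : (2 - (c-1) - c) * (2 - (c-1) - c + 1) = (2*c-3) * (2*(c-2)) := by ring
    rw [u]
    exact mul_ne_zero hc23 (mul_ne_zero h2 hc2)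

private lemma mem5 (five : ∀ z : D, z*(z-1)*(z-2)*(z-3)*(z-4) = 0) (z : D) :
    z = 0 ∨ z = 1 ∨ z = 2 ∨ z = 3 ∨ z = 4 := by
  rcases mul_eq_zero.mp (five z) with h | h
  · rcases mul_eq_zero.mp h with h' | h'
    · rcases mul_eq_zero.mp h' with h'' | h''
      · rcases mul_eq_zero.mp h'' with h''' | h'''
        · exact Or.inl h'''
        · exact Or.inr (Or.inl (sub_eq_zero.mp h'''))
      · exact Or.inr (Or.inr (Or.inl (sub_eq_zero.mp h'')))
    · exact Or.inr (Or.inr (Or.inr (Or.inl (sub_eq_zero.mp h'))))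
  · exact Or.inr (Or.inr (Or.inr (Or.inr (sub_eq_zero.mp h))))

private lemma sq5 (h5 : (5:D) = 0) (five : ∀ z : D, z*(z-1)*(z-2)*(z-3)*(z-4) = 0) (z : D) :
    z*z = 0 ∨ z*z = 1 ∨ z*z = 4 := by
  rcases mem5 five z with h | h | h | h | h <;> subst h
  · left; ring
  · right; left; ring
  · right; right; norm_num
  · right; right; linear_combination h5
  · right; left; linear_combination 3*h5

private lemma not_sq (h5 : (5:D) = 0) (h2 : (2:D) ≠ 0) (h3 : (3:D) ≠ 0)
    (five : ∀ z : D, z*(z-1)*(z-2)*(z-3)*(z-4) = 0)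
    (d s w : D) (hs : s ≠ 0) (hw : w = 2 ∨ w = 3) (h : d*d = (s*s)*w) : False := by
  have h1 : (1:D) ≠ 0 := one_ne_zero
  have hss : s*s = 1 ∨ s*s = 4 := by
    rcases sq5 h5 five s with h' | h' | h'
    · exact absurd ((mul_self_eq_zero).mp h') hs
    · exact Or.inl h'
    · exact Or.inr h'
  rcases sq5 h5 five d with hd | hd | hd <;> rw [hd] at h <;>
    rcases hss with hs' | hs' <;> rw [hs'] at h <;> rcases hw with hw' | hw' <;> subst hw'
  · exact h2 (by linear_combination -h)
  · exact h3 (by linear_combination -h)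
  · exact h3 (by linear_combination -h - h5)
  · exact h2 (by linear_combination -h - 2*h5)
  · exact h1 (by linear_combination -h)
  · exact h2 (by linear_combination -h)
  · exact h2 (by linear_combination -h - h5)
  · exact h1 (by linear_combination -h - 2*h5)
  · exact h2 (by linear_combination h)
  · exact h1 (by linear_combination h)
  · exact h1 (by linear_combination h5 + h)
  · exact h3 (by linear_combination -h - h5)

private lemma char2_sq (hn : 0 < n) (h2 : (2:D) = 0)
    (E F G : Matrix (Fin n) (Fin n) D) (hE : E * E = E) (hF : F * F = F) (hG : G * G = G)
    (c : D) (hsum : E + F + G = Matrix.single (⟨0, hn⟩ : Fin n) ⟨0, hn⟩ c) :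
    c * c = c := by
  set z : Fin n := ⟨0, hn⟩
  set A : Matrix (Fin n) (Fin n) D := Matrix.single z z c with hA
  have key : trace (A*A) = trace A + (2:D) * (trace (E*F) + trace (E*G) + trace (F*G)) := by
    rw [← hsum]
    simp only [add_mul, mul_add, trace_add]
    rw [hE, hF, hG, trace_mul_comm F E, trace_mul_comm G E, trace_mul_comm G F]
    ring
  rw [h2, zero_mul, add_zero] at key
  have hAA : A * A = Matrix.single z z (c*c) := by
    rw [hA, single_mul_single_same]
  have htr : ∀ a : D, trace (Matrix.single z z a) = a := by
    intro a
    rw [trace]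
    rw [diag_single_same]
    simp
  rw [hAA, htr, htr] at key
  exact key

private lemma odd_killer (h5 : (5:D) = 0) (h2 : (2:D) ≠ 0) (h3 : (3:D) ≠ 0)
    (five : ∀ z : D, z*(z-1)*(z-2)*(z-3)*(z-4) = 0)
    (m : ℕ) (hnm : n = 2*m+1)
    (E F G : Matrix (Fin n) (Fin n) D) (hE : E * E = E) (hF : F * F = F) (hG : G * G = G)
    (hsum : E + F + G = (4:D) • (1 : Matrix (Fin n) (Fin n) D)) : False := by
  set S : Matrix (Fin n) (Fin n) D := F + G with hSdef
  set Dm : Matrix (Fin n) (Fin n) D := F - G with hDdef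
  have hES : E = (4:D) • (1 : Matrix (Fin n) (Fin n) D) - S := by rw [hSdef, ← hsum]; abel
  have hSlin : S = (-1:D) • E + (4:D) • (1 : Matrix (Fin n) (Fin n) D) := by rw [hES]; module
  have hE' : E*E = (1:D) • E + (0:D) • (1 : Matrix (Fin n) (Fin n) D) := by
    rw [hE]; module
  have hSS : S*S = (-7:D) • E + (16:D) • (1 : Matrix (Fin n) (Fin n) D) := by
    rw [hSlin, lin_mul E 1 0 hE']
    norm_num
  have hD5 : Dm * Dm = (5:D) • E + (-8:D) • (1 : Matrix (Fin n) (Fin n) D) := by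
    rw [hDdef, diff_sq F G hF hG, ← hSdef, hSS, hSlin]
    match_scalars <;> ring
  have h8 : (-8:D) = 2 := by linear_combination -2*h5
  rw [h5, h8, zero_smul, zero_add] at hD5
  have hdet := congrArg det hD5
  rw [det_mul, det_smul, det_one, mul_one, Fintype.card_fin] at hdet
  have hp : (2:D)^n = ((2:D)^m * (2:D)^m) * 2 := by rw [hnm, pow_succ, two_mul, pow_add]
  rw [hp] at hdet
  exact not_sq h5 h2 h3 five (det Dm) ((2:D)^m) 2 (pow_ne_zero m h2) (Or.inl rfl) hdet

private lemma corner_part1 (hn : 0 < n) (h5 : (5:D) = 0)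
    (E F G : Matrix (Fin n) (Fin n) D) (hE : E * E = E) (hF : F * F = F) (hG : G * G = G)
    (hsum : E + F + G
      = (4:D) • (1 : Matrix (Fin n) (Fin n) D) + (2:D) • Matrix.single (⟨0,hn⟩ : Fin n) ⟨0,hn⟩ 1) :
    ((F-G) * (F-G) = (2:D) • ((1 : Matrix (Fin n) (Fin n) D)
        + ((2:D) • Matrix.single (⟨0,hn⟩ : Fin n) ⟨0,hn⟩ 1
           + Matrix.single (⟨0,hn⟩ : Fin n) ⟨0,hn⟩ 1 * E
           + E * Matrix.single (⟨0,hn⟩ : Fin n) ⟨0,hn⟩ 1)))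
    ∧ det ((1 : Matrix (Fin n) (Fin n) D)
        + ((2:D) • Matrix.single (⟨0,hn⟩ : Fin n) ⟨0,hn⟩ 1
           + Matrix.single (⟨0,hn⟩ : Fin n) ⟨0,hn⟩ 1 * E
           + E * Matrix.single (⟨0,hn⟩ : Fin n) ⟨0,hn⟩ 1))
      = E ⟨0,hn⟩ ⟨0,hn⟩ * E ⟨0,hn⟩ ⟨0,hn⟩ + E ⟨0,hn⟩ ⟨0,hn⟩ + 3 := by
  set z : Fin n := ⟨0, hn⟩ with hz
  set Q : Matrix (Fin n) (Fin n) D := Matrix.single z z 1 with hQ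
  set A : Matrix (Fin n) (Fin n) D := (4:D) • 1 + (2:D) • Q with hA
  set R : Matrix (Fin n) (Fin n) D := (2:D) • Q + Q * E + E * Q with hR
  set α : D := E z z with hαdef
  have hQQ : Q * Q = Q := by rw [hQ, single_mul_single_same, one_mul]
  have hS : F + G = A - E := by rw [← hsum]; abel
  constructor
  · have hexp : (A - E) * (A - E) = A*A - A*E - E*A + E*E := by noncomm_ring
    have hAA : A * A = (16:D) • (1 : Matrix (Fin n) (Fin n) D) + (20:D) • Q := by
      rw [hA]
      simp only [add_mul, mul_add, smul_mul_assoc, mul_smul_comm, smul_smul, mul_one, one_mul, hQQ]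
      match_scalars <;> ring
    have hAE : A * E = (4:D) • E + (2:D) • (Q * E) := by
      rw [hA, add_mul, smul_mul_assoc, smul_mul_assoc, one_mul]
    have hEA : E * A = (4:D) • E + (2:D) • (E * Q) := by
      rw [hA, mul_add, mul_smul_comm, mul_smul_comm, mul_one]
    have step : (F-G) * (F-G) = (-8:D) • (1 : Matrix (Fin n) (Fin n) D) + (-16:D) • Q
        + (5:D) • E + (2:D) • (Q*E) + (2:D) • (E*Q) := by
      rw [diff_sq F G hF hG, hS, hexp, hAA, hAE, hEA, hE, hA]
      match_scalars <;> ring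
    have e8 : (-8:D) = 2 := by linear_combination -2*h5
    have e16 : (-16:D) = 4 := by linear_combination -4*h5
    rw [e8, e16, h5, zero_smul, add_zero] at step
    rw [step]
    match_scalars <;> ring
  · -- entry formulas
    have hQapp : ∀ i j, Q i j = (if i = z ∧ j = z then (1:D) else 0) := by
      intro i j
      by_cases hi : i = z <;> by_cases hj : j = z
      · subst hi; subst hj; rw [hQ, single_apply_same, if_pos ⟨rfl, rfl⟩]
      · rw [hQ, single_apply_of_ne _ _ _ _ _ (fun h => hj h.2.symm),
          if_neg (fun h => hj h.2)]
      · rw [hQ, single_apply_of_ne _ _ _ _ _ (fun h => hi h.1.symm),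
          if_neg (fun h => hi h.1)]
      · rw [hQ, single_apply_of_ne _ _ _ _ _ (fun h => hi h.1.symm),
          if_neg (fun h => hi h.1)]
    have hQE : ∀ i j, (Q*E) i j = (if i = z then E z j else 0) := by
      intro i j
      by_cases hi : i = z
      · subst hi; rw [hQ, single_mul_apply_same, one_mul, if_pos rfl]
      · rw [hQ, single_mul_apply_of_ne _ _ _ _ _ hi, if_neg hi]
    have hEQ : ∀ i j, (E*Q) i j = (if j = z then E i z else 0) := by
      intro i j
      by_cases hj : j = z
      · subst hj; rw [hQ, mul_single_apply_same, mul_one, if_pos rfl]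
      · rw [hQ, mul_single_apply_of_ne _ _ _ _ _ hj, if_neg hj]
    have hRapp : ∀ i j, R i j = 2*(if i = z ∧ j = z then (1:D) else 0)
        + (if i = z then E z j else 0) + (if j = z then E i z else 0) := by
      intro i j
      rw [hR]
      simp only [Matrix.add_apply, Matrix.smul_apply, smul_eq_mul]
      rw [hQapp, hQE, hEQ]
    -- the rank ≤ 2 factorization
    set Bt : Matrix (Fin 2) (Fin n) D :=
      Matrix.of ![fun i => if i = z then (1:D) else 0, fun i => E i z] with hBt
    set C : Matrix (Fin 2) (Fin n) D :=
      Matrix.of ![fun i => 2 * (if i = z then (1:D) else 0) + E z i,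
                  fun i => if i = z then (1:D) else 0] with hC
    have hBC : R = Btᵀ * C := by
      ext i j
      rw [Matrix.mul_apply, Fin.sum_univ_two, hRapp]
      simp only [hBt, hC, Matrix.transpose_apply, Matrix.of_apply, Matrix.cons_val_zero,
        Matrix.cons_val_one, Matrix.head_cons]
      by_cases hi : i = z <;> by_cases hj : j = z <;>
        simp only [hi, hj, if_pos, if_neg, if_true, if_false, and_self, true_and,
          and_false, false_and, reduceIte] <;> ring
    have hsingle : ∀ f : Fin n → D, (∑ k, f k * (if k = z then (1:D) else 0)) = f z := by
      intro f
      rw [Finset.sum_eq_single z]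
      · simp
      · intro b _ hb; simp [hb]
      · intro h; exact absurd (Finset.mem_univ z) h
    have hsingle' : ∀ f : Fin n → D, (∑ k, (if k = z then (1:D) else 0) * f k) = f z := by
      intro f
      rw [Finset.sum_eq_single z]
      · simp
      · intro b _ hb; simp [hb]
      · intro h; exact absurd (Finset.mem_univ z) h
    rw [hBC, Matrix.det_one_add_mul_comm, Matrix.det_fin_two]
    simp only [Matrix.add_apply, Matrix.one_apply_eq,
      Matrix.one_apply_ne (show (0:Fin 2) ≠ 1 by decide),
      Matrix.one_apply_ne (show (1:Fin 2) ≠ 0 by decide),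
      Matrix.mul_apply, Matrix.transpose_apply, hBt, hC, Matrix.of_apply,
      Matrix.cons_val_zero, Matrix.cons_val_one, Matrix.head_cons]
    have e00 : (∑ k, (2 * (if k = z then (1:D) else 0) + E z k) * (if k = z then (1:D) else 0))
        = 2 + α := by
      rw [hsingle (fun k => 2 * (if k = z then (1:D) else 0) + E z k)]
      rw [if_pos rfl, hαdef]; ring
    have e01 : (∑ k, (2 * (if k = z then (1:D) else 0) + E z k) * E k z) = 2*α + α := by
      have split : ∀ k, (2 * (if k = z then (1:D) else 0) + E z k) * E k z
          = (if k = z then (1:D) else 0) * (2 * E k z) + E z k * E k z := by intro k; ring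
      rw [Finset.sum_congr rfl (fun k _ => split k), Finset.sum_add_distrib,
        hsingle' (fun k => 2 * E k z), ← Matrix.mul_apply, hE, hαdef]
    have e10 : (∑ k, (if k = z then (1:D) else 0) * (if k = z then (1:D) else 0)) = 1 := by
      rw [hsingle' (fun k => if k = z then (1:D) else 0), if_pos rfl]
    have e11 : (∑ k, (if k = z then (1:D) else 0) * E k z) = α := by
      rw [hsingle' (fun k => E k z), hαdef]
    rw [e00, e01, e10, e11]
    ring

private lemma corner_part2 (hn : 0 < n) (h5 : (5:D) = 0) (h2 : (2:D) ≠ 0)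
    (E F G : Matrix (Fin n) (Fin n) D) (hE : E * E = E) (hF : F * F = F) (hG : G * G = G)
    (hsum : E + F + G
      = (4:D) • (1 : Matrix (Fin n) (Fin n) D) + (2:D) • Matrix.single (⟨0,hn⟩ : Fin n) ⟨0,hn⟩ 1)
    (hD2 : (F-G) * (F-G) = (2:D) • ((1 : Matrix (Fin n) (Fin n) D)
        + ((2:D) • Matrix.single (⟨0,hn⟩ : Fin n) ⟨0,hn⟩ 1
           + Matrix.single (⟨0,hn⟩ : Fin n) ⟨0,hn⟩ 1 * E
           + E * Matrix.single (⟨0,hn⟩ : Fin n) ⟨0,hn⟩ 1)))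
    (hα : E ⟨0,hn⟩ ⟨0,hn⟩ = 2) : False := by
  have h1 : (1:D) ≠ 0 := one_ne_zero
  have h4 : (4:D) ≠ 0 := fun h => h1 (by linear_combination h5 - h)
  set z : Fin n := ⟨0, hn⟩ with hz
  set Q : Matrix (Fin n) (Fin n) D := Matrix.single z z 1 with hQ
  set R : Matrix (Fin n) (Fin n) D := (2:D) • Q + Q * E + E * Q with hR
  set Dm : Matrix (Fin n) (Fin n) D := F - G with hDm
  set X : Matrix (Fin n) (Fin n) D :=
    ((4:D) • (1 : Matrix (Fin n) (Fin n) D) + (2:D) • Q) - E - 1 with hX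
  clear_value Q R Dm X
  have hS : F + G = X + 1 := by rw [hX, ← hsum]; abel
  -- anticommutation
  have hDX : Dm * X + X * Dm = 0 := by
    have h := diff_sum F G hF hG
    rw [hS, ← hDm] at h
    have expand : Dm * (X + 1) + (X + 1) * Dm = (Dm * X + X * Dm) + (2:D) • Dm := by
      rw [mul_add, add_mul, mul_one, one_mul, two_smul]; abel
    rw [expand] at h
    have := sub_eq_zero.mpr h
    rw [add_sub_cancel_right] at this
    exact this
  -- commutation with R
  have hDR : Dm * R = R * Dm := by
    have hassoc : Dm * (Dm * Dm) = (Dm * Dm) * Dm := by rw [mul_assoc]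
    rw [hD2] at hassoc
    have h2' : (2:D) • (Dm + Dm * R) = (2:D) • (Dm + R * Dm) := by
      calc (2:D) • (Dm + Dm * R) = Dm * ((2:D) • (1 + R)) := by
            rw [mul_smul_comm, mul_add, mul_one]
        _ = ((2:D) • (1 + R)) * Dm := hassoc
        _ = (2:D) • (Dm + R * Dm) := by rw [smul_mul_assoc, add_mul, one_mul]
    ext i j
    have hij := congrFun (congrFun h2' i) j
    simp only [Matrix.smul_apply, Matrix.add_apply, smul_eq_mul] at hij
    have := mul_left_cancel₀ h2 hij
    exact add_left_cancel this
  -- vectors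
  set e : Fin n → D := fun i => if i = z then (1:D) else 0 with he
  set u : Fin n → D := fun i => E i z with hu
  have hsingle : ∀ f : Fin n → D, (∑ k, f k * (if k = z then (1:D) else 0)) = f z := by
    intro f
    rw [Finset.sum_eq_single z]
    · simp
    · intro b _ hb; simp [hb]
    · intro h; exact absurd (Finset.mem_univ z) h
  have hmve : ∀ M : Matrix (Fin n) (Fin n) D, M.mulVec e = fun i => M i z := by
    intro M; funext i
    rw [he]
    show (∑ j, M i j * (if j = z then (1:D) else 0)) = M i z
    exact hsingle (M i)
  have hEe : E.mulVec e = u := hmve E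
  have hEu : E.mulVec u = u := by
    rw [← hEe, mulVec_mulVec, hE]
  have huz : u z = 2 := hα
  have hez : e z = 1 := if_pos rfl
  have hQv : ∀ v : Fin n → D, Q.mulVec v = (v z) • e := by
    intro v
    rw [hQ, single_mulVec]
    funext i
    rw [Function.update_apply]
    by_cases hi : i = z <;> simp [hi, he]
  have hRv : ∀ v : Fin n → D,
      R.mulVec v = (2 * (v z) + (E.mulVec v) z) • e + (v z) • u := by
    intro v
    rw [hR, add_mulVec, add_mulVec, smul_mulVec, hQv]
    have h1' : (Q * E).mulVec v = ((E.mulVec v) z) • e := by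
      rw [← mulVec_mulVec, hQv]
    have h2'' : (E * Q).mulVec v = (v z) • u := by
      rw [← mulVec_mulVec, hQv, mulVec_smul, hEe]
    rw [h1', h2'', smul_smul, add_smul]
  -- X action
  have hXe : X.mulVec e = -u := by
    have step : X.mulVec e = (5:D) • e - u := by
      rw [hX, sub_mulVec, sub_mulVec, add_mulVec, smul_mulVec, smul_mulVec,
        one_mulVec, hQv, hEe, hez]
      module
    rw [step, h5, zero_smul, zero_sub]
  have hXu : X.mulVec u = (4:D) • e + (2:D) • u := by
    rw [hX, sub_mulVec, sub_mulVec, add_mulVec, smul_mulVec, smul_mulVec,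
      one_mulVec, hQv, hEu, huz]
    module
  -- the two key vectors
  have he1 : R.mulVec (e + (2:D) • u) = e := by
    have hvz : (e + (2:D) • u) z = 5 := by
      simp only [Pi.add_apply, Pi.smul_apply, smul_eq_mul, hez, huz]; norm_num
    have hEvz : (E.mulVec (e + (2:D) • u)) z = 6 := by
      rw [mulVec_add, mulVec_smul, hEe, hEu]
      simp only [Pi.add_apply, Pi.smul_apply, smul_eq_mul, huz]; norm_num
    rw [hRv, hvz, hEvz]
    have c1 : (2*(5:D) + 6) = 1 := by linear_combination 3*h5
    rw [c1, h5, one_smul, zero_smul, add_zero]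
  have hu1 : R.mulVec ((2:D) • e + (2:D) • u) = u := by
    have hvz : ((2:D) • e + (2:D) • u) z = 6 := by
      simp only [Pi.add_apply, Pi.smul_apply, smul_eq_mul, hez, huz]; norm_num
    have hEvz : (E.mulVec ((2:D) • e + (2:D) • u)) z = 8 := by
      rw [mulVec_add, mulVec_smul, mulVec_smul, hEe, hEu]
      simp only [Pi.add_apply, Pi.smul_apply, smul_eq_mul, huz]; norm_num
    rw [hRv, hvz, hEvz]
    have c1 : (2*(6:D) + 8) = 0 := by linear_combination 4*h5
    have c2 : (6:D) = 1 := by linear_combination h5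
    rw [c1, c2, one_smul, zero_smul, zero_add]
  -- decompose Dm e and Dm u
  set w₁ : Fin n → D := Dm.mulVec (e + (2:D) • u) with hw₁
  set w₂ : Fin n → D := Dm.mulVec ((2:D) • e + (2:D) • u) with hw₂
  set p : D := 2 * (w₁ z) + (E.mulVec w₁) z with hp
  set q : D := w₁ z with hq
  set r : D := 2 * (w₂ z) + (E.mulVec w₂) z with hr
  set s : D := w₂ z with hs
  have hDe : Dm.mulVec e = p • e + q • u := by
    calc Dm.mulVec e = Dm.mulVec (R.mulVec (e + (2:D) • u)) := by rw [he1]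
      _ = (Dm * R).mulVec (e + (2:D) • u) := by rw [mulVec_mulVec]
      _ = (R * Dm).mulVec (e + (2:D) • u) := by rw [hDR]
      _ = R.mulVec w₁ := by rw [← mulVec_mulVec, ← hw₁]
      _ = p • e + q • u := by rw [hRv, ← hq, ← hp]
  have hDu : Dm.mulVec u = r • e + s • u := by
    calc Dm.mulVec u = Dm.mulVec (R.mulVec ((2:D) • e + (2:D) • u)) := by rw [hu1]
      _ = (Dm * R).mulVec ((2:D) • e + (2:D) • u) := by rw [mulVec_mulVec]
      _ = (R * Dm).mulVec ((2:D) • e + (2:D) • u) := by rw [hDR]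
      _ = R.mulVec w₂ := by rw [← mulVec_mulVec, ← hw₂]
      _ = r • e + s • u := by rw [hRv, ← hs, ← hr]
  -- independence of e, u
  have hne_u : ∃ i, i ≠ z ∧ u i ≠ 0 := by
    by_contra hcon
    push_neg at hcon
    have hdeg : u = (2:D) • e := by
      funext i
      by_cases hi : i = z
      · subst hi; rw [huz]; simp [he, hez]
      · rw [hcon i hi]; simp [he, hi]
    have habs := hEu
    rw [hdeg, mulVec_smul, hEe, hdeg, smul_smul] at habs
    have h42 := congrFun habs z
    simp only [Pi.smul_apply, smul_eq_mul, hez, mul_one] at h42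
    exact h2 (by linear_combination h42)
  have hcoef : ∀ a b a' b' : D, (a • e + b • u = a' • e + b' • u) → a = a' ∧ b = b' := by
    intro a b a' b' hab
    obtain ⟨i0, hi0, hui0⟩ := hne_u
    have h_at : ∀ i, a * e i + b * u i = a' * e i + b' * u i := by
      intro i
      have := congrFun hab i
      simpa only [Pi.add_apply, Pi.smul_apply, smul_eq_mul] using this
    have hb : b = b' := by
      have h0 := h_at i0
      rw [he] at h0
      simp only [if_neg hi0, mul_zero, zero_add] at h0
      have : (b - b') * u i0 = 0 := by linear_combination h0
      rcases mul_eq_zero.mp this with h' | h'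
      · exact sub_eq_zero.mp h'
      · exact absurd h' hui0
    have ha : a = a' := by
      have h0 := h_at z
      rw [hez, huz, hb] at h0
      linear_combination h0
    exact ⟨ha, hb⟩
  -- first equation (applied to e)
  have veq1 : (4*q - r) • e + (2*q - p - s) • u = 0 := by
    have h := congrArg (fun M : Matrix (Fin n) (Fin n) D => M.mulVec e) hDX
    simp only [add_mulVec, zero_mulVec, ← mulVec_mulVec] at h
    rw [hXe, hDe] at h
    simp only [mulVec_neg, mulVec_add, mulVec_smul] at h
    rw [hDu, hXe, hXu] at h
    have rearr : (4*q - r) • e + (2*q - p - s) • u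
        = -(r • e + s • u) + (p • -u + q • ((4:D) • e + (2:D) • u)) := by module
    rw [rearr]
    exact h
  have veq2 : (4*p + 2*r + 4*s) • e + (4*q + 4*s - r) • u = 0 := by
    have h := congrArg (fun M : Matrix (Fin n) (Fin n) D => M.mulVec u) hDX
    simp only [add_mulVec, zero_mulVec, ← mulVec_mulVec] at h
    rw [hXu, hDu] at h
    simp only [mulVec_add, mulVec_smul] at h
    rw [hDe, hDu, hXe, hXu] at h
    have rearr : (4*p + 2*r + 4*s) • e + (4*q + 4*s - r) • u
        = ((4:D) • (p • e + q • u) + (2:D) • (r • e + s • u))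
          + (r • -u + s • ((4:D) • e + (2:D) • u)) := by module
    rw [rearr]
    exact h
  have hzero : ((0:D)) • e + ((0:D)) • u = (0 : Fin n → D) := by module
  obtain ⟨hc1, hc2⟩ := hcoef (4*q - r) (2*q - p - s) 0 0 (by rw [hzero]; exact veq1)
  obtain ⟨hc3, hc4⟩ := hcoef (4*p + 2*r + 4*s) (4*q + 4*s - r) 0 0 (by rw [hzero]; exact veq2)
  -- solve: q = 0, p = 0
  have hq0 : q = 0 := by linear_combination hc3 + 4*hc2 + 2*hc1 - 3*q*h5
  have hp0 : p = 0 := by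
    have h4p : (4:D) * p = 0 := by linear_combination -hc4 + hc1 - 4*hc2 + 8*hq0
    exact (mul_eq_zero.mp h4p).resolve_left h4
  -- final contradiction
  have final : (0 : Fin n → D) = (2:D) • u := by
    have lhs : (Dm * Dm).mulVec e = 0 := by
      rw [← mulVec_mulVec, hDe, hp0, hq0, zero_smul, zero_smul, add_zero, mulVec_zero]
    have rhs : (Dm * Dm).mulVec e = (2:D) • u := by
      rw [hD2, smul_mulVec, add_mulVec, one_mulVec, hRv, hez, hEe, huz]
      have step : e + ((2 * (1:D) + 2) • e + (1:D) • u) = (5:D) • e + (1:D) • u := by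
        match_scalars <;> ring
      rw [step, h5, zero_smul, zero_add, one_smul]
    rw [← lhs, rhs]
  have h4z := congrFun final z
  simp only [Pi.zero_apply, Pi.smul_apply, smul_eq_mul, huz] at h4z
  exact h4 (by linear_combination -h4z)
private lemma corner (hn : 0 < n) (h5 : (5:D) = 0) (h2 : (2:D) ≠ 0) (h3 : (3:D) ≠ 0)
    (five : ∀ w : D, w*(w-1)*(w-2)*(w-3)*(w-4) = 0)
    (m : ℕ) (hnm : n = 2*m)
    (E F G : Matrix (Fin n) (Fin n) D) (hE : E * E = E) (hF : F * F = F) (hG : G * G = G)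
    (hsum : E + F + G
      = (4:D) • (1 : Matrix (Fin n) (Fin n) D) + (2:D) • Matrix.single (⟨0,hn⟩ : Fin n) ⟨0,hn⟩ 1) :
    E ⟨0,hn⟩ ⟨0,hn⟩ = 1 ∨ E ⟨0,hn⟩ ⟨0,hn⟩ = 3 := by
  obtain ⟨hD2, hdet⟩ := corner_part1 hn h5 E F G hE hF hG hsum
  have hdd : det (F-G) * det (F-G)
      = ((2:D)^m * (2:D)^m) * (E ⟨0,hn⟩ ⟨0,hn⟩ * E ⟨0,hn⟩ ⟨0,hn⟩ + E ⟨0,hn⟩ ⟨0,hn⟩ + 3) := by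
    have hthis := congrArg det hD2
    rw [det_mul, det_smul, Fintype.card_fin, hdet] at hthis
    have hpow : (2:D)^n = 2^m * 2^m := by rw [hnm, two_mul, pow_add]
    rw [hthis, hpow]
  rcases mem5 five (E ⟨0,hn⟩ ⟨0,hn⟩) with h0 | h0 | h0 | h0 | h0
  · exfalso
    rw [h0, show ((0:D)*0 + 0 + 3) = 3 from by norm_num] at hdd
    exact not_sq h5 h2 h3 five _ _ _ (pow_ne_zero m h2) (Or.inr rfl) hdd
  · exact Or.inl h0
  · exact absurd (corner_part2 hn h5 h2 E F G hE hF hG hsum hD2 h0) (fun h => h)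
  · exact Or.inr h0
  · exfalso
    rw [h0, show ((4:D)*4 + 4 + 3) = 3 from by linear_combination 4*h5] at hdd
    exact not_sq h5 h2 h3 five _ _ _ (pow_ne_zero m h2) (Or.inr rfl) hdd

private lemma even_killer (hn : 0 < n) (h5 : (5:D) = 0) (h2 : (2:D) ≠ 0) (h3 : (3:D) ≠ 0)
    (five : ∀ w : D, w*(w-1)*(w-2)*(w-3)*(w-4) = 0)
    (m : ℕ) (hnm : n = 2*m)
    (E F G : Matrix (Fin n) (Fin n) D) (hE : E * E = E) (hF : F * F = F) (hG : G * G = G)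
    (hsum : E + F + G
      = (4:D) • (1 : Matrix (Fin n) (Fin n) D) + (2:D) • Matrix.single (⟨0,hn⟩ : Fin n) ⟨0,hn⟩ 1) :
    False := by
  have h1 : (1:D) ≠ 0 := one_ne_zero
  have c1 := corner hn h5 h2 h3 five m hnm E F G hE hF hG hsum
  have c2 := corner hn h5 h2 h3 five m hnm F E G hF hE hG (by rw [← hsum]; abel)
  have c3 := corner hn h5 h2 h3 five m hnm G F E hG hF hE (by rw [← hsum]; abel)
  have hcorner : E ⟨0,hn⟩ ⟨0,hn⟩ + F ⟨0,hn⟩ ⟨0,hn⟩ + G ⟨0,hn⟩ ⟨0,hn⟩ = 6 := by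
    have hent := congrFun (congrFun hsum ⟨0,hn⟩) ⟨0,hn⟩
    simp only [Matrix.add_apply, Matrix.smul_apply, Matrix.one_apply_eq,
      single_apply_same, smul_eq_mul, mul_one] at hent
    rw [hent]; norm_num
  rcases c1 with h | h <;> rcases c2 with h' | h' <;> rcases c3 with h'' | h'' <;>
    rw [h, h', h''] at hcorner <;>
    first
      | exact h1 (by linear_combination hcorner - h5)
      | exact h1 (by linear_combination hcorner)
      | exact h1 (by linear_combination -hcorner)
      | exact h3 (by linear_combination hcorner)
      | exact h3 (by linear_combination -hcorner)
      | exact h2 (by linear_combination hcorner)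
      | exact h2 (by linear_combination -hcorner)
      | exact h1 (by linear_combination hcorner + h5)
      | exact h3 (by linear_combination hcorner - h5)
      | exact h3 (by linear_combination hcorner + h5)
      | exact h2 (by linear_combination hcorner - h5)
      | exact h2 (by linear_combination hcorner + h5)

/-- In a domain in which every `n × n` matrix is a sum of three idempotents,
every element satisfies `c³ = c`. -/
private lemma domain_cube (hn : 0 < n)
    (hdec : ∀ A : Matrix (Fin n) (Fin n) D,
      ∃ E F G : Matrix (Fin n) (Fin n) D,
        E*E = E ∧ F*F = F ∧ G*G = G ∧ E + F + G = A) (c : D) : c^3 = c := by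
  by_cases h2 : (2:D) = 0
  · obtain ⟨E, F, G, hE, hF, hG, hsum⟩ := hdec (Matrix.single (⟨0,hn⟩ : Fin n) ⟨0,hn⟩ c)
    have hcc := char2_sq hn h2 E F G hE hF hG c hsum
    calc c^3 = c*c*c := by ring
      _ = c := by rw [hcc, hcc]
  · have hconstraint : ∀ x : D, x*(x-1)*(x-2)*(x-3)*(2*x-3) = 0 := by
      intro x
      obtain ⟨E, F, G, hE, hF, hG, hsum⟩ := hdec (x • 1)
      exact scalar_constraint hn h2 x E F G hE hF hG hsum
    by_cases h3 : (3:D) = 0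
    · have hx := hconstraint c
      have h2c : (2:D) * (c*c*c*(c-1)*(c-2)) = 0 := by
        linear_combination hx + (3*c*(c-1)*(c-1)*(c-2))*h3
      have hc' := (mul_eq_zero.mp h2c).resolve_left h2
      rcases mul_eq_zero.mp hc' with h | h
      · rcases mul_eq_zero.mp h with h' | h'
        · rcases mul_eq_zero.mp h' with h'' | h''
          · rcases mul_eq_zero.mp h'' with h''' | h'''
            · rw [h''']; ring
            · rw [h''']; ring
          · rw [h'']; ring
        · have : c = 1 := by linear_combination h'
          rw [this]; ring
      · have : c = 2 := by linear_combination h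
        rw [this]; linear_combination 2*h3
    · have h120 : (120:D) = 0 := by linear_combination hconstraint 4
      have h5 : (5:D) = 0 := by
        have e1 : (2:D) * (2 * (2 * (3 * 5))) = 0 := by linear_combination h120
        have e2 := (mul_eq_zero.mp e1).resolve_left h2
        have e3 := (mul_eq_zero.mp e2).resolve_left h2
        have e4 := (mul_eq_zero.mp e3).resolve_left h2
        exact (mul_eq_zero.mp e4).resolve_left h3
      have five : ∀ w : D, w*(w-1)*(w-2)*(w-3)*(w-4) = 0 := by
        intro w
        have h2w : (2:D) * (w*(w-1)*(w-2)*(w-3)*(w-4)) = 0 := by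
          linear_combination hconstraint w - (w*(w-1)*(w-2)*(w-3))*h5
        exact (mul_eq_zero.mp h2w).resolve_left h2
      exfalso
      rcases Nat.even_or_odd n with he | ho
      · obtain ⟨m, hm⟩ := he
        obtain ⟨E, F, G, hE, hF, hG, hsum⟩ :=
          hdec ((4:D) • 1 + (2:D) • Matrix.single (⟨0,hn⟩ : Fin n) ⟨0,hn⟩ 1)
        exact even_killer hn h5 h2 h3 five m (by omega) E F G hE hF hG hsum
      · obtain ⟨m, hm⟩ := ho
        obtain ⟨E, F, G, hE, hF, hG, hsum⟩ := hdec ((4:D) • 1)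
        exact odd_killer h5 h2 h3 five m hm E F G hE hF hG hsum

end Helpers

/-- If every matrix in `M_n(R)` over a commutative ring `R` (with `n ≥ 1`) is a sum of
three idempotents, then the Jacobson radical `J(R)` is nil and `R/J(R)` satisfies the
identity `x^3 = x`. -/
theorem jacobson_nil_and_quotient_cube_eq_self (R : Type*) [CommRing R] (n : ℕ)
    (hn : 1 ≤ n)
    (h : ∀ A : Matrix (Fin n) (Fin n) R,
      ∃ E₁ E₂ E₃ : Matrix (Fin n) (Fin n) R,
        E₁ * E₁ = E₁ ∧ E₂ * E₂ = E₂ ∧ E₃ * E₃ = E₃ ∧ A = E₁ + E₂ + E₃) :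
    (∀ x ∈ Ideal.jacobson (⊥ : Ideal R), IsNilpotent x) ∧
      (∀ x : R ⧸ Ideal.jacobson (⊥ : Ideal R), x ^ 3 = x) := by
  have key : ∀ x : R, IsNilpotent (x^3 - x) := by
    intro x
    rw [← mem_nilradical, nilradical_eq_sInf, Submodule.mem_sInf]
    intro p hp
    haveI hpp : Ideal.IsPrime p := hp
    have hsur : Function.Surjective (Ideal.Quotient.mk p) := Ideal.Quotient.mk_surjective
    have hdec : ∀ A : Matrix (Fin n) (Fin n) (R ⧸ p),
        ∃ E F G : Matrix (Fin n) (Fin n) (R ⧸ p),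
          E*E = E ∧ F*F = F ∧ G*G = G ∧ E + F + G = A := by
      intro A
      obtain ⟨A₀, hA₀⟩ : ∃ A₀ : Matrix (Fin n) (Fin n) R,
          A₀.map (Ideal.Quotient.mk p) = A :=
        ⟨Matrix.of fun i j => (hsur (A i j)).choose, by
          ext i j; exact (hsur (A i j)).choose_spec⟩
      obtain ⟨E, F, G, hE, hF, hG, hA⟩ := h A₀
      refine ⟨(Ideal.Quotient.mk p).mapMatrix E, (Ideal.Quotient.mk p).mapMatrix F,
        (Ideal.Quotient.mk p).mapMatrix G, ?_, ?_, ?_, ?_⟩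
      · rw [← _root_.map_mul, hE]
      · rw [← _root_.map_mul, hF]
      · rw [← _root_.map_mul, hG]
      · rw [← _root_.map_add, ← _root_.map_add, ← hA, RingHom.mapMatrix_apply, hA₀]
    have hcube := domain_cube (by omega : 0 < n) hdec (Ideal.Quotient.mk p x)
    have hzero : Ideal.Quotient.mk p (x^3 - x) = 0 := by
      rw [map_sub, map_pow, hcube, sub_self]
    exact (Ideal.Quotient.eq_zero_iff_mem).mp hzero
  constructor
  · intro x hx
    have hu : IsUnit (x * (-x) + 1) := (Ideal.mem_jacobson_bot.mp hx) (-x)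
    obtain ⟨v, hv⟩ := hu.exists_right_inv
    have hnil : IsNilpotent (x - x^3) := by
      have := (key x).neg
      rwa [neg_sub] at this
    have hx3 : x - x^3 = x * (x * (-x) + 1) := by ring
    have hxv : x = (x - x^3) * v := by
      rw [hx3, mul_assoc, hv, mul_one]
    obtain ⟨k, hk⟩ := hnil
    exact ⟨k, by rw [hxv, mul_pow, hk, zero_mul]⟩
  · intro x
    obtain ⟨y, rfl⟩ := Ideal.Quotient.mk_surjective x
    have hmem : y^3 - y ∈ Ideal.jacobson (⊥ : Ideal R) := by
      rw [Ideal.jacobson, Submodule.mem_sInf]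
      intro J hJ
      have hJm : Ideal.IsMaximal J := hJ.2
      obtain ⟨k, hk⟩ := key y
      exact (hJm.isPrime).mem_of_pow_mem k (by rw [hk]; exact J.zero_mem)
    have : Ideal.Quotient.mk (Ideal.jacobson (⊥ : Ideal R)) (y^3 - y) = 0 :=
      (Ideal.Quotient.eq_zero_iff_mem).mpr hmem
    rw [map_sub, map_pow, sub_eq_zero] at this
    exact this
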